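/- Let n ≥ 1, g ≥ 1, let x_1, …, x_n ∈ ℝ, and let z_{ik} ∈ {0,1} (1 ≤ i ≤ n, 1 ≤ k ≤ g) satisfy Σ_{k=1}^g z_{ik} = 1 for every i, with class sizes n_k = Σ_i z_{ik} ≥ 1 for every k. Let α > 0, β > 0, δ > 0, λ ∈ ℝ, and for each k set x̄_k = (1/n_k) Σ_i z_{ik} x_i and s_k² = β² + Σ_i z_{ik}(x_i − x̄_k)² + (n_kδ/(n_k+δ))·(x̄_k − λ)². Then ∫ … ∫ (∏_{i=1}^n ∏_{k=1}^g φ(x_i | μ_k, σ_k²)^{z_{ik}}) · ∏_{k=1}^g [φ(μ_k | λ, σ_k²/δ) · ig(σ_k²; α/2, β²/2)] dμ_1 dσ_1² ⋯ dμ_g dσ_g², integrated over (μ_k, σ_k²) ∈ ℝ × (0,∞) for each k, equals ∏_{k=1}^g π^{−n_k/2} · (Γ((n_k+α)/2)/Γ(α/2)) · (β^α / s_k^{n_k+α}) · √(δ/(n_k+δ)). -/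

import Mathlib

open MeasureTheory
open Real Set

/-- The univariate Gaussian density `φ(x | μ, σ²) = (2πσ²)^{-1/2} exp(-(x-μ)²/(2σ²))`. -/
noncomputable def gaussPdf (x μ v : ℝ) : ℝ :=
  (2 * Real.pi * v) ^ (-(1 : ℝ) / 2) * Real.exp (-(x - μ) ^ 2 / (2 * v))

/-- The Inverse-Gamma density `ig(v; a, b) = (b^a / Γ(a)) v^{-a-1} exp(-b/v)`. -/
noncomputable def invGammaPdf (v a b : ℝ) : ℝ :=
  b ^ a / Real.Gamma a * v ^ (-(a + 1)) * Real.exp (-b / v)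


lemma aux_gamma_integrable {a b : ℝ} (ha : 0 < a) (hb : 0 < b) :
    IntegrableOn (fun t : ℝ => t ^ (a - 1) * Real.exp (-(b * t))) (Ioi 0) := by
  have h0 : IntegrableOn (fun t : ℝ => Real.exp (-t) * t ^ (a - 1)) (Ioi 0) :=
    Real.GammaIntegral_convergent ha
  have h1 : IntegrableOn (fun t : ℝ => Real.exp (-(b*t)) * (b*t) ^ (a - 1)) (Ioi 0) := by
    have := (integrableOn_Ioi_comp_mul_left_iff
      (fun t : ℝ => Real.exp (-t) * t ^ (a - 1)) 0 hb).mpr (by simpa using h0)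
    simpa using this
  have h2 : IntegrableOn (fun t : ℝ => ((b:ℝ) ^ (a-1))⁻¹ * (Real.exp (-(b*t)) * (b*t) ^ (a - 1))) (Ioi 0) := h1.const_mul ((b : ℝ) ^ (a-1))⁻¹
  refine IntegrableOn.congr_fun h2 ?_ measurableSet_Ioi
  intro t ht
  dsimp only
  have htpos : (0 : ℝ) < t := ht
  rw [mul_rpow hb.le htpos.le]
  have hbne : (b : ℝ) ^ (a - 1) ≠ 0 := (rpow_pos_of_pos hb _).ne'
  field_simp

lemma aux_invGamma_integrable {a b : ℝ} (ha : 0 < a) (hb : 0 < b) :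
    IntegrableOn (fun v : ℝ => v ^ (-(a + 1)) * Real.exp (-b / v)) (Ioi 0) := by
  have h0 := (integrableOn_Ioi_comp_rpow_iff
      (fun y : ℝ => y ^ (a - 1) * Real.exp (-(b * y))) (p := (-1 : ℝ)) (by norm_num)).mpr
      (aux_gamma_integrable ha hb)
  refine IntegrableOn.congr_fun h0 ?_ measurableSet_Ioi
  intro t ht
  dsimp only
  have htpos : (0 : ℝ) < t := ht
  have h1 : (t : ℝ) ^ (-1 : ℝ) = t⁻¹ := by rw [rpow_neg_one]
  rw [h1, smul_eq_mul, inv_rpow htpos.le, ← rpow_neg htpos.le]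
  rw [show |(-1 : ℝ)| = 1 by norm_num, one_mul]
  rw [show ((-1 : ℝ) - 1) = (-2 : ℝ) by norm_num]
  rw [← mul_assoc, ← rpow_add htpos]
  rw [show ((-2 : ℝ) + -(a-1)) = -(a+1) by ring]
  congr 1
  rw [neg_div, div_eq_mul_inv]

lemma aux_invGamma_value {a b : ℝ} (ha : 0 < a) (hb : 0 < b) :
    ∫ v in Ioi (0:ℝ), v ^ (-(a + 1)) * Real.exp (-b / v) = Real.Gamma a / b ^ a := by
  have key := integral_comp_rpow_Ioi
      (fun y : ℝ => y ^ (a - 1) * Real.exp (-(b * y))) (p := (-1 : ℝ)) (by norm_num)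
  have hL : (∫ x in Ioi (0:ℝ), (|(-1:ℝ)| * x ^ ((-1:ℝ) - 1)) •
      ((x ^ (-1:ℝ)) ^ (a - 1) * Real.exp (-(b * x ^ (-1:ℝ)))))
      = ∫ v in Ioi (0:ℝ), v ^ (-(a + 1)) * Real.exp (-b / v) := by
    refine setIntegral_congr_fun measurableSet_Ioi ?_
    intro t ht
    dsimp only
    have htpos : (0 : ℝ) < t := ht
    have h1 : (t : ℝ) ^ (-1 : ℝ) = t⁻¹ := by rw [rpow_neg_one]
    rw [h1, smul_eq_mul, inv_rpow htpos.le, ← rpow_neg htpos.le]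
    rw [show |(-1 : ℝ)| = 1 by norm_num, one_mul]
    rw [show ((-1 : ℝ) - 1) = (-2 : ℝ) by norm_num]
    rw [← mul_assoc, ← rpow_add htpos]
    rw [show ((-2 : ℝ) + -(a-1)) = -(a+1) by ring]
    congr 1
    rw [neg_div, div_eq_mul_inv]
  rw [← hL, key, Real.integral_rpow_mul_exp_neg_mul_Ioi ha hb]
  rw [one_div, Real.inv_rpow hb.le, div_eq_mul_inv, mul_comm]

lemma aux_gauss_integrable (m : ℝ) {c : ℝ} (hc : 0 < c) :
    Integrable (fun u : ℝ => Real.exp (-(c * (u - m) ^ 2))) := by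
  simpa using (integrable_exp_neg_mul_sq hc).comp_sub_right m

lemma aux_gauss_value (m : ℝ) {c : ℝ} (hc : 0 < c) :
    ∫ u : ℝ, Real.exp (-(c * (u - m) ^ 2)) = Real.sqrt (π / c) := by
  rw [show (fun u : ℝ => Real.exp (-(c * (u - m) ^ 2)))
      = (fun u : ℝ => Real.exp (-c * u ^ 2)) ∘ (fun u => u - m) by funext u; simp [neg_mul]]
  rw [show (∫ u : ℝ, ((fun u : ℝ => Real.exp (-c * u ^ 2)) ∘ (fun u => u - m)) u)
      = ∫ u : ℝ, Real.exp (-c * u ^ 2) from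
    integral_sub_right_eq_self (fun u : ℝ => Real.exp (-c * u ^ 2)) m]
  exact integral_gaussian c

lemma key2d {a b c C m : ℝ} (ha : 0 < a) (hb : 0 < b) (hc : 0 < c) (hC : 0 ≤ C) :
    ∫ p : ℝ × ℝ in (Set.univ ×ˢ Ioi (0:ℝ)),
      C * (p.2 ^ (-(a + 1) - 1/2) * Real.exp (-(b + c / 2 * (p.1 - m) ^ 2) / p.2))
      = C * Real.sqrt (2 * π / c) * (Real.Gamma a / b ^ a) := by
  set f : ℝ × ℝ → ℝ :=
    fun p => C * (p.2 ^ (-(a + 1) - 1/2) * Real.exp (-(b + c / 2 * (p.1 - m) ^ 2) / p.2)) with hf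
  -- pointwise split
  have hsplit : ∀ v : ℝ, 0 < v → ∀ u : ℝ, f (u, v)
      = (C * v ^ (-(a + 1) - 1/2) * Real.exp (-b / v)) * Real.exp (-((c / (2*v)) * (u - m)^2)) := by
    intro v hv u
    have hv' : v ≠ 0 := hv.ne'
    rw [hf]
    dsimp only
    rw [mul_assoc (C * v ^ (-(a + 1) - 1/2)), ← Real.exp_add, mul_assoc]
    congr 2
    field_simp
    ring
  -- inner integral value
  have hinner : ∀ v : ℝ, 0 < v → (∫ u : ℝ, f (u, v))
      = (C * Real.sqrt (2 * π / c)) * (v ^ (-(a+1)) * Real.exp (-b / v)) := by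
    intro v hv
    have hcv : 0 < c / (2*v) := by positivity
    calc ∫ u : ℝ, f (u, v)
        = ∫ u : ℝ, (C * v ^ (-(a + 1) - 1/2) * Real.exp (-b / v))
            * Real.exp (-((c / (2*v)) * (u - m)^2)) := by
          exact integral_congr_ae (Filter.Eventually.of_forall fun u => hsplit v hv u)
      _ = (C * v ^ (-(a + 1) - 1/2) * Real.exp (-b / v)) * Real.sqrt (π / (c / (2*v))) := by
          rw [integral_const_mul, aux_gauss_value m hcv]
      _ = (C * Real.sqrt (2 * π / c)) * (v ^ (-(a+1)) * Real.exp (-b / v)) := by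
          have h1 : π / (c / (2*v)) = (2 * π / c) * v := by field_simp
          have h2 : v ^ (-(a + 1) - 1/2) * v ^ ((1:ℝ)/2) = v ^ (-(a+1)) := by
            rw [← Real.rpow_add hv]; congr 1; ring
          rw [h1, Real.sqrt_mul (by positivity) v, Real.sqrt_eq_rpow v, ← h2]
          ring
  have hmeasf : Measurable f := by
    rw [hf]; fun_prop
  have hnn : ∀ v : ℝ, 0 < v → ∀ u : ℝ, 0 ≤ f (u, v) := by
    intro v hv u
    rw [hf]
    dsimp only
    have h1 : (0:ℝ) ≤ v ^ (-(a + 1) - 1/2) := Real.rpow_nonneg hv.le _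
    have h2 : (0:ℝ) ≤ Real.exp (-(b + c / 2 * (u - m) ^ 2) / v) := Real.exp_nonneg _
    exact mul_nonneg hC (mul_nonneg h1 h2)
  rw [Measure.volume_eq_prod, ← Measure.prod_restrict, Measure.restrict_univ]
  have hint : Integrable f (volume.prod (volume.restrict (Ioi 0))) := by
    rw [integrable_prod_iff' hmeasf.aestronglyMeasurable]
    constructor
    · filter_upwards [ae_restrict_mem measurableSet_Ioi] with v hv
      refine ((aux_gauss_integrable m (show 0 < c/(2*v) by have hv' : 0 < v := hv; positivity)).const_mul
        (C * v ^ (-(a+1)-1/2) * Real.exp (-b/v))).congr ?_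
      exact Filter.Eventually.of_forall fun u => (hsplit v hv u).symm
    · refine (((aux_invGamma_integrable ha hb).const_mul (C * Real.sqrt (2*π/c)))).congr ?_
      filter_upwards [ae_restrict_mem measurableSet_Ioi] with v hv
      rw [← hinner v hv]
      exact (integral_congr_ae (Filter.Eventually.of_forall fun u =>
        (Real.norm_of_nonneg (hnn v hv u)).symm))
  rw [integral_prod_symm f hint]
  rw [setIntegral_congr_fun measurableSet_Ioi (fun v hv => hinner v hv)]
  rw [integral_const_mul, aux_invGamma_value ha hb]

lemma prod_gauss_eq {n : ℕ} (x : Fin n → ℝ) (w : Fin n → ℕ) (u v : ℝ) (hv : 0 < v) :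
    (∏ i, gaussPdf (x i) u v ^ w i)
      = Real.exp ((∑ i, (w i : ℝ)) * (Real.log (2*π*v) * (-(1:ℝ)/2))
          - (∑ i, (w i : ℝ) * (x i - u)^2) / (2*v)) := by
  have h2πv : (0:ℝ) < 2*π*v := by positivity
  have hg : ∀ i : Fin n, gaussPdf (x i) u v ^ w i
      = Real.exp ((w i : ℝ) * (Real.log (2*π*v) * (-(1:ℝ)/2) + (-(x i - u)^2 / (2*v)))) := by
    intro i
    rw [gaussPdf, Real.rpow_def_of_pos h2πv, ← Real.exp_add, ← Real.exp_nat_mul]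
  rw [Finset.prod_congr rfl (fun i _ => hg i), ← Real.exp_sum]
  congr 1
  have h : ∀ i ∈ Finset.univ, (w i : ℝ) * (Real.log (2*π*v) * (-(1:ℝ)/2) + (-(x i - u)^2 / (2*v)))
      = (w i : ℝ) * (Real.log (2*π*v) * (-(1:ℝ)/2)) - ((w i : ℝ) * (x i - u)^2) / (2*v) :=
    fun i _ => by ring
  rw [Finset.sum_congr rfl h, Finset.sum_sub_distrib, ← Finset.sum_mul, ← Finset.sum_div]

set_option maxHeartbeats 2000000 in
lemma per_class {n : ℕ} (x : Fin n → ℝ) (w : Fin n → ℕ) (α β δ lam : ℝ)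
    (hα : 0 < α) (hβ : 0 < β) (hδ : 0 < δ)
    (N : ℝ) (hN : N = ∑ i, (w i : ℝ)) (hN1 : 1 ≤ N)
    (xb : ℝ) (hxb : N * xb = ∑ i, (w i : ℝ) * x i)
    (s2 : ℝ) (hs2 : s2 = β^2 + (∑ i, (w i : ℝ) * (x i - xb)^2) + (N*δ/(N+δ)) * (xb - lam)^2) :
    (∫ p : ℝ × ℝ in Set.univ ×ˢ Ioi (0:ℝ),
      (∏ i, gaussPdf (x i) p.1 p.2 ^ w i) *
        (gaussPdf p.1 lam (p.2 / δ) * invGammaPdf p.2 (α/2) (β^2/2)))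
      = π ^ (-N/2) * (Real.Gamma ((N+α)/2) / Real.Gamma (α/2))
          * (β ^ α / Real.sqrt s2 ^ (N+α)) * Real.sqrt (δ/(N+δ)) := by
  have hπ : (0:ℝ) < π := pi_pos
  have hNpos : (0:ℝ) < N := lt_of_lt_of_le one_pos hN1
  have hc : (0:ℝ) < N + δ := by linarith
  have hcne : (N + δ) ≠ 0 := hc.ne'
  have hG : 0 < Real.Gamma (α/2) := Real.Gamma_pos_of_pos (by positivity)
  have hGA : 0 < Real.Gamma ((N+α)/2) := Real.Gamma_pos_of_pos (by positivity)
  set Q1 : ℝ := ∑ i, (w i : ℝ) * x i with hQ1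
  set Q2 : ℝ := ∑ i, (w i : ℝ) * (x i)^2 with hQ2
  have hQ : ∀ t : ℝ, ∑ i, (w i : ℝ) * (x i - t)^2 = Q2 - 2*t*Q1 + t^2*N := by
    intro t
    have h : ∀ i ∈ Finset.univ, (w i : ℝ) * (x i - t)^2
        = ((w i : ℝ) * (x i)^2 - t*(2*((w i : ℝ) * x i))) + t^2*(w i : ℝ) :=
      fun i _ => by ring
    rw [Finset.sum_congr rfl h, Finset.sum_add_distrib, Finset.sum_sub_distrib,
      ← Finset.mul_sum, ← Finset.mul_sum, ← Finset.mul_sum, hQ1, hQ2, ← hN]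
    ring
  have hsum_nonneg : (0:ℝ) ≤ ∑ i, (w i : ℝ) * (x i - xb)^2 :=
    Finset.sum_nonneg fun i _ => mul_nonneg (Nat.cast_nonneg _) (sq_nonneg _)
  have hthird : (0:ℝ) ≤ (N*δ/(N+δ)) * (xb - lam)^2 := by positivity
  have hs2pos : 0 < s2 := by rw [hs2]; nlinarith [sq_nonneg β, pow_pos hβ 2]
  set a : ℝ := (N+α)/2 with ha_def
  have ha : 0 < a := by positivity
  set bval : ℝ := s2 / 2 with hbval
  have hb : 0 < bval := by positivity
  set c : ℝ := N + δ with hc_def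
  set m : ℝ := (N * xb + δ * lam) / c with hm
  set C : ℝ := (2*π) ^ (-(N/2)) * ((2*π/δ) ^ (-(1:ℝ)/2) * ((β^2/2) ^ (α/2) / Real.Gamma (α/2)))
    with hCdef
  have hC : 0 < C := by positivity
  have hpt : EqOn
      (fun p : ℝ × ℝ => (∏ i, gaussPdf (x i) p.1 p.2 ^ w i) *
        (gaussPdf p.1 lam (p.2 / δ) * invGammaPdf p.2 (α/2) (β^2/2)))
      (fun p : ℝ × ℝ => C * (p.2 ^ (-(a + 1) - 1/2)
        * Real.exp (-(bval + c / 2 * (p.1 - m) ^ 2) / p.2)))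
      (Set.univ ×ˢ Ioi (0:ℝ)) := by
    rintro ⟨u, v⟩ hp
    have hv : (0:ℝ) < v := hp.2
    dsimp only
    have hLpos : 0 < (∏ i, gaussPdf (x i) u v ^ w i) *
        (gaussPdf u lam (v / δ) * invGammaPdf v (α/2) (β^2/2)) := by
      have h1 : 0 < ∏ i, gaussPdf (x i) u v ^ w i := by
        refine Finset.prod_pos fun i _ => pow_pos ?_ _
        rw [gaussPdf]; positivity
      have h2 : 0 < gaussPdf u lam (v / δ) := by rw [gaussPdf]; positivity
      have h3 : 0 < invGammaPdf v (α/2) (β^2/2) := by rw [invGammaPdf]; positivity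
      positivity
    have hRpos : 0 < C * (v ^ (-(a + 1) - 1/2)
        * Real.exp (-(bval + c / 2 * (u - m) ^ 2) / v)) := by positivity
    rw [← Set.InjOn.eq_iff Real.log_injOn_pos (Set.mem_Ioi.mpr hLpos) (Set.mem_Ioi.mpr hRpos)]
    rw [prod_gauss_eq x w u v hv, gaussPdf, invGammaPdf, hQ u, hCdef, hbval, hs2, hQ xb, hm,
      hc_def, ha_def, ← hN, ← hxb]
    simp (disch := positivity) only [Real.log_mul, Real.log_div, Real.log_rpow, Real.log_exp,
      Real.log_pow, Real.exp_ne_zero, Real.log_inv, Real.rpow_natCast]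
    field_simp
    ring
  rw [setIntegral_congr_fun (MeasurableSet.univ.prod measurableSet_Ioi) hpt,
    key2d ha hb hc hC.le]
  -- final algebra
  have hLpos : 0 < C * Real.sqrt (2 * π / c) * (Real.Gamma a / bval ^ a) := by positivity
  have hRpos : 0 < π ^ (-N/2) * (Real.Gamma ((N+α)/2) / Real.Gamma (α/2))
      * (β ^ α / Real.sqrt s2 ^ (N+α)) * Real.sqrt (δ/(N+δ)) := by positivity
  rw [← Set.InjOn.eq_iff Real.log_injOn_pos (Set.mem_Ioi.mpr hLpos) (Set.mem_Ioi.mpr hRpos)]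
  rw [hCdef, hbval, ha_def, hc_def]
  simp (disch := positivity) only [Real.log_mul, Real.log_div, Real.log_rpow, Real.log_exp,
    Real.log_pow, Real.log_sqrt, Real.log_inv, Real.sqrt_eq_rpow]
  ring

lemma indicator_pi_prod {ι X : Type*} [Fintype ι] (s : Set X) (f : ι → X → ℝ) (θ : ι → X) :
    (Set.univ.pi fun _ : ι => s).indicator (fun θ' => ∏ k, f k (θ' k)) θ
      = ∏ k, s.indicator (f k) (θ k) := by
  by_cases h : θ ∈ Set.univ.pi fun _ : ι => s
  · rw [Set.indicator_of_mem h]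
    exact Finset.prod_congr rfl fun k _ => (Set.indicator_of_mem (h k (Set.mem_univ k)) _).symm
  · rw [Set.indicator_of_notMem h]
    have h' := h
    rw [Set.mem_pi] at h'
    push_neg at h'
    obtain ⟨k, _, hk⟩ := h'
    exact (Finset.prod_eq_zero (Finset.mem_univ k) (Set.indicator_of_notMem hk _)).symm


/-- Closed-form per-variable factor of the integrated complete-data likelihood for a
relevant variable: given a partition `z` of `n` observations into `g` nonempty classes,
the integral over `(μ_k, σ_k²) ∈ ℝ × (0,∞)` for each `k` of
`(∏ᵢ∏ₖ φ(xᵢ|μₖ,σₖ²)^{z_{ik}}) ∏ₖ φ(μₖ|λ,σₖ²/δ) ig(σₖ²;α/2,β²/2)` equals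
`∏ₖ π^{-n_k/2} (Γ((n_k+α)/2)/Γ(α/2)) (β^α/s_k^{n_k+α}) √(δ/(n_k+δ))`. -/
theorem marginal_likelihood_relevant_variable (n g : ℕ) (hn : 1 ≤ n) (hg : 1 ≤ g)
    (x : Fin n → ℝ) (z : Fin n → Fin g → ℕ)
    (hz01 : ∀ i k, z i k ≤ 1) (hz : ∀ i, ∑ k, z i k = 1)
    (nk : Fin g → ℕ) (hnk : ∀ k, nk k = ∑ i, z i k) (hnk1 : ∀ k, 1 ≤ nk k)
    (α β δ lam : ℝ) (hα : 0 < α) (hβ : 0 < β) (hδ : 0 < δ) :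
    let xbar : Fin g → ℝ := fun k => (1 / (nk k : ℝ)) * ∑ i, (z i k : ℝ) * x i
    let s2 : Fin g → ℝ := fun k => β ^ 2 + (∑ i, (z i k : ℝ) * (x i - xbar k) ^ 2)
      + ((nk k : ℝ) * δ / ((nk k : ℝ) + δ)) * (xbar k - lam) ^ 2
    (∫ θ in {θ : Fin g → ℝ × ℝ | ∀ k, 0 < (θ k).2},
        (∏ i, ∏ k, gaussPdf (x i) (θ k).1 (θ k).2 ^ z i k)
          * ∏ k, gaussPdf (θ k).1 lam ((θ k).2 / δ) * invGammaPdf (θ k).2 (α / 2) (β ^ 2 / 2))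
      = ∏ k, Real.pi ^ (-(nk k : ℝ) / 2)
          * (Real.Gamma (((nk k : ℝ) + α) / 2) / Real.Gamma (α / 2))
          * (β ^ α / Real.sqrt (s2 k) ^ ((nk k : ℝ) + α))
          * Real.sqrt (δ / ((nk k : ℝ) + δ)) := by
  intro xbar s2
  have hp2m : MeasurableSet {p : ℝ × ℝ | 0 < p.2} :=
    measurableSet_lt measurable_const measurable_snd
  set f : Fin g → ℝ × ℝ → ℝ := fun k p =>
    (∏ i, gaussPdf (x i) p.1 p.2 ^ z i k) *
      (gaussPdf p.1 lam (p.2 / δ) * invGammaPdf p.2 (α/2) (β^2/2)) with hfdef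
  have hSm : MeasurableSet (Set.univ.pi fun _ : Fin g => {p : ℝ × ℝ | 0 < p.2}) :=
    MeasurableSet.univ_pi fun _ => hp2m
  have hSet : {θ : Fin g → ℝ × ℝ | ∀ k, 0 < (θ k).2}
      = Set.univ.pi (fun _ : Fin g => {p : ℝ × ℝ | 0 < p.2}) := by
    ext θ; simp [Set.mem_pi]
  have hprod : ∀ θ : Fin g → ℝ × ℝ,
      ((∏ i, ∏ k, gaussPdf (x i) (θ k).1 (θ k).2 ^ z i k)
        * ∏ k, gaussPdf (θ k).1 lam ((θ k).2 / δ) * invGammaPdf (θ k).2 (α/2) (β^2/2))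
      = ∏ k, f k (θ k) := by
    intro θ
    rw [hfdef, Finset.prod_comm, ← Finset.prod_mul_distrib]
  calc (∫ θ in {θ : Fin g → ℝ × ℝ | ∀ k, 0 < (θ k).2},
        (∏ i, ∏ k, gaussPdf (x i) (θ k).1 (θ k).2 ^ z i k)
          * ∏ k, gaussPdf (θ k).1 lam ((θ k).2 / δ) * invGammaPdf (θ k).2 (α / 2) (β ^ 2 / 2))
      = ∫ θ in Set.univ.pi (fun _ : Fin g => {p : ℝ × ℝ | 0 < p.2}), ∏ k, f k (θ k) := by
        rw [hSet]
        exact setIntegral_congr_fun hSm fun θ _ => hprod θ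
    _ = ∫ θ : Fin g → ℝ × ℝ,
          (Set.univ.pi fun _ : Fin g => {p : ℝ × ℝ | 0 < p.2}).indicator
            (fun θ' => ∏ k, f k (θ' k)) θ := (integral_indicator hSm).symm
    _ = ∫ θ : Fin g → ℝ × ℝ, ∏ k, ({p : ℝ × ℝ | 0 < p.2}.indicator (f k)) (θ k) := by
        congr 1
        funext θ
        exact indicator_pi_prod _ f θ
    _ = ∏ k, ∫ p : ℝ × ℝ, ({p : ℝ × ℝ | 0 < p.2}.indicator (f k)) p :=
        integral_fintype_prod_eq_prod fun k => ({p : ℝ × ℝ | 0 < p.2}.indicator (f k))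
    _ = ∏ k, Real.pi ^ (-(nk k : ℝ) / 2)
          * (Real.Gamma (((nk k : ℝ) + α) / 2) / Real.Gamma (α / 2))
          * (β ^ α / Real.sqrt (s2 k) ^ ((nk k : ℝ) + α))
          * Real.sqrt (δ / ((nk k : ℝ) + δ)) := by
        refine Finset.prod_congr rfl fun k _ => ?_
        have hNpos : (0:ℝ) < (nk k : ℝ) := by exact_mod_cast hnk1 k
        have hps : {p : ℝ × ℝ | 0 < p.2} = Set.univ ×ˢ Ioi (0:ℝ) := by
          ext p; simp [Set.mem_prod]
        rw [integral_indicator hp2m, hps, hfdef]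
        refine per_class x (fun i => z i k) α β δ lam hα hβ hδ ((nk k : ℝ)) ?_
          (by exact_mod_cast hnk1 k) (xbar k) ?_ (s2 k) rfl
        · rw [hnk k]; push_cast; ring
        · show ((nk k : ℝ)) * ((1 / (nk k : ℝ)) * ∑ i, (z i k : ℝ) * x i) = _
          field_simp
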